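/- arXiv:2103.04839 — 3 statements merged into one kernel-verified Lean document; each statement's English description precedes it below -/
import Mathlib

section
/- For p>0 and α,β ∈ ℝ and T>0, the integral ∫_0^T ∫_0^1 |t^α x^β e^{-x²/(4t)}|^p dx dt is finite if and only if pβ > -1 and p(2α+β) > -3. -/
open MeasureTheory Real Set

private lemma stmt0_innerInt {b c : ℝ} (hc : 0 < c) (hb : -1 < b) :
    IntegrableOn (fun x : ℝ => x ^ b * Real.exp (-c * x ^ 2)) (Ioo 0 1) :=
  (integrableOn_rpow_mul_exp_neg_mul_sq hc hb).mono_set Ioo_subset_Ioi_self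

private lemma stmt0_innerNotInt {b c : ℝ} (hc : 0 < c) (hb : b ≤ -1) :
    ¬ IntegrableOn (fun x : ℝ => x ^ b * Real.exp (-c * x ^ 2)) (Ioo 0 1) := by
  intro h
  have hInt : IntegrableOn (fun x : ℝ => x ^ b) (Ioo 0 1) := by
    apply Integrable.mono' ((h.const_mul (Real.exp c)))
    · apply Measurable.aestronglyMeasurable
      measurability
    · filter_upwards [ae_restrict_mem measurableSet_Ioo] with x hx
      have hx0 : (0:ℝ) < x := hx.1
      have hx1 : x < 1 := hx.2
      rw [Real.norm_eq_abs, abs_of_nonneg (Real.rpow_nonneg hx0.le b)]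
      have h1 : (1:ℝ) ≤ Real.exp c * Real.exp (-c * x ^ 2) := by
        rw [← Real.exp_add]
        have hxsq : x ^ 2 ≤ 1 := by nlinarith
        have : (0:ℝ) ≤ c + -c * x ^ 2 := by nlinarith
        calc (1:ℝ) = Real.exp 0 := by simp
        _ ≤ Real.exp (c + -c * x ^ 2) := Real.exp_le_exp.2 this
      calc x ^ b = x ^ b * 1 := by ring
      _ ≤ x ^ b * (Real.exp c * Real.exp (-c * x ^ 2)) :=
          mul_le_mul_of_nonneg_left h1 (Real.rpow_nonneg hx0.le b)
      _ = Real.exp c * (x ^ b * Real.exp (-c * x ^ 2)) := by ring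
  rw [intervalIntegral.integrableOn_Ioo_rpow_iff one_pos] at hInt
  linarith

private lemma stmt0_intRpowIoo {b s : ℝ} (hb : -1 < b) (hs : 0 < s) :
    ∫ x in Ioo (0:ℝ) s, x ^ b = s ^ (b+1) / (b+1) := by
  rw [← integral_Ioc_eq_integral_Ioo, ← intervalIntegral.integral_of_le hs.le,
    integral_rpow (Or.inl hb), Real.zero_rpow (by linarith), sub_zero]

private lemma stmt0_innerUpper {b p t : ℝ} (hb : -1 < b) (hp : 0 < p) (ht : 0 < t) :
    ∫ x in Ioo (0:ℝ) 1, x ^ b * Real.exp (-(p/(4*t)) * x ^ 2)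
      ≤ ((p/4) ^ (-(b + 1) / 2) * (1/2) * Real.Gamma ((b + 1) / 2)) * t ^ ((b+1)/2) := by
  have hc : 0 < p/(4*t) := by positivity
  have h1 : ∫ x in Ioo (0:ℝ) 1, x ^ b * Real.exp (-(p/(4*t)) * x ^ 2)
      ≤ ∫ x in Ioi (0:ℝ), x ^ b * Real.exp (-(p/(4*t)) * x ^ 2) := by
    apply setIntegral_mono_set (integrableOn_rpow_mul_exp_neg_mul_sq hc hb)
    · filter_upwards [ae_restrict_mem measurableSet_Ioi] with x hx
      exact mul_nonneg (Real.rpow_nonneg (le_of_lt hx) _) (Real.exp_nonneg _)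
    · exact HasSubset.Subset.eventuallyLE Ioo_subset_Ioi_self
  refine h1.trans_eq ?_
  have h2 : ∫ x in Ioi (0:ℝ), x ^ b * Real.exp (-(p/(4*t)) * x ^ 2)
      = (p/(4*t)) ^ (-(b + 1) / 2) * (1/2) * Real.Gamma ((b + 1) / 2) := by
    simp_rw [← Real.rpow_two]
    exact integral_rpow_mul_exp_neg_mul_rpow two_pos hb hc
  rw [h2]
  have h3 : (p/(4*t)) ^ (-(b + 1) / 2) = (p/4) ^ (-(b + 1) / 2) * t ^ ((b+1)/2) := by
    have he : p/(4*t) = (p/4) * t⁻¹ := by ring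
    rw [he, Real.mul_rpow (by positivity) (inv_nonneg.mpr ht.le),
      Real.inv_rpow ht.le, ← Real.rpow_neg ht.le]
    congr 1
    ring
  rw [h3]
  ring

private lemma stmt0_innerLower {b p t : ℝ} (hb : -1 < b) (hp : 0 < p) (ht : 0 < t)
    (ht1 : t ≤ 1) :
    Real.exp (-(p/4)) / (b+1) * t ^ ((b+1)/2)
      ≤ ∫ x in Ioo (0:ℝ) 1, x ^ b * Real.exp (-(p/(4*t)) * x ^ 2) := by
  have hc : 0 < p/(4*t) := by positivity
  have hb1 : (0:ℝ) < b + 1 := by linarith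
  set s := Real.sqrt t with hs
  have hs0 : 0 < s := Real.sqrt_pos.mpr ht
  have hs1 : s ≤ 1 := by
    rw [show (1:ℝ) = Real.sqrt 1 by simp [Real.sqrt_one]]
    exact Real.sqrt_le_sqrt ht1
  have hpow : s ^ (b+1) = t ^ ((b+1)/2) := by
    rw [hs, Real.sqrt_eq_rpow, ← Real.rpow_mul ht.le]
    congr 1
    ring
  have key0 : ∫ x in Ioo (0:ℝ) s, x ^ b * Real.exp (-(p/4))
      = Real.exp (-(p/4)) / (b+1) * t ^ ((b+1)/2) := by
    rw [integral_mul_const, stmt0_intRpowIoo hb hs0, hpow]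
    ring
  have key1 : ∫ x in Ioo (0:ℝ) s, x ^ b * Real.exp (-(p/4))
      ≤ ∫ x in Ioo (0:ℝ) s, x ^ b * Real.exp (-(p/(4*t)) * x ^ 2) := by
    apply setIntegral_mono_on
    · exact ((intervalIntegral.integrableOn_Ioo_rpow_iff hs0).2 hb).mul_const _
    · exact (stmt0_innerInt hc hb).mono_set (Ioo_subset_Ioo_right hs1)
    · exact measurableSet_Ioo
    · intro x hx
      refine mul_le_mul_of_nonneg_left ?_ (Real.rpow_nonneg hx.1.le b)
      apply Real.exp_le_exp.2
      have hx2 : x ^ 2 ≤ t := le_of_lt ((Real.lt_sqrt hx.1.le).1 hx.2)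
      have hle : p/(4*t) * x ^ 2 ≤ p/4 := by
        rw [div_mul_eq_mul_div, div_le_div_iff₀ (by positivity) (by norm_num)]
        nlinarith
      linarith
  have key2 : ∫ x in Ioo (0:ℝ) s, x ^ b * Real.exp (-(p/(4*t)) * x ^ 2)
      ≤ ∫ x in Ioo (0:ℝ) 1, x ^ b * Real.exp (-(p/(4*t)) * x ^ 2) := by
    apply setIntegral_mono_set (stmt0_innerInt hc hb)
    · filter_upwards [ae_restrict_mem measurableSet_Ioo] with x hx
      exact mul_nonneg (Real.rpow_nonneg hx.1.le _) (Real.exp_nonneg _)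
    · exact HasSubset.Subset.eventuallyLE (Ioo_subset_Ioo_right hs1)
  linarith

private lemma stmt0_measRpow (e : ℝ) : Measurable fun t : ℝ => t ^ e := by
  measurability

private lemma stmt0_normIntegral {a b p t : ℝ} (ht : 0 < t) :
    ∫ x, ‖t ^ a * (x ^ b * Real.exp (-(p/(4*t)) * x ^ 2))‖
        ∂(volume.restrict (Ioo (0:ℝ) 1))
      = t ^ a * ∫ x in Ioo (0:ℝ) 1, x ^ b * Real.exp (-(p/(4*t)) * x ^ 2) := by
  rw [← integral_const_mul]
  refine setIntegral_congr_fun measurableSet_Ioo fun x hx => ?_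
  rw [Real.norm_eq_abs, abs_of_nonneg]
  exact mul_nonneg (Real.rpow_nonneg ht.le _)
    (mul_nonneg (Real.rpow_nonneg hx.1.le _) (Real.exp_nonneg _))

theorem stmt0 (p α β T : ℝ) (hp : 0 < p) (hT : 0 < T) :
    IntegrableOn
      (fun q : ℝ × ℝ => |q.1 ^ α * q.2 ^ β * Real.exp (-q.2 ^ 2 / (4 * q.1))| ^ p)
      (Ioo 0 T ×ˢ Ioo 0 1) volume
    ↔ p * β > -1 ∧ p * (2 * α + β) > -3 := by
  set a := α * p with ha
  set b := β * p with hbDef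
  set F : ℝ × ℝ → ℝ :=
    fun q => q.1 ^ a * (q.2 ^ b * Real.exp (-(p/(4*q.1)) * q.2 ^ 2)) with hF
  have hFmeas : Measurable F := by
    rw [hF]; measurability
  have hcongr : EqOn
      (fun q : ℝ × ℝ => |q.1 ^ α * q.2 ^ β * Real.exp (-q.2 ^ 2 / (4 * q.1))| ^ p)
      F (Ioo 0 T ×ˢ Ioo 0 1) := by
    rintro ⟨t, x⟩ ⟨htm, hxm⟩
    have ht : (0:ℝ) < t := htm.1
    have hx : (0:ℝ) < x := hxm.1
    have hpos : 0 < t ^ α * x ^ β * Real.exp (-x ^ 2 / (4 * t)) := by positivity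
    simp only
    rw [abs_of_pos hpos, mul_assoc,
      Real.mul_rpow (Real.rpow_nonneg ht.le α)
        (mul_nonneg (Real.rpow_nonneg hx.le β) (Real.exp_nonneg _)),
      Real.mul_rpow (Real.rpow_nonneg hx.le β) (Real.exp_nonneg _),
      ← Real.rpow_mul ht.le, ← Real.rpow_mul hx.le, ← Real.exp_mul]
    rw [hF]
    simp only
    rw [← ha, ← hbDef]
    congr 2
    field_simp
  rw [integrableOn_congr_fun hcongr (measurableSet_Ioo.prod measurableSet_Ioo)]
  rw [IntegrableOn, Measure.volume_eq_prod, ← Measure.prod_restrict,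
    integrable_prod_iff hFmeas.aestronglyMeasurable]
  have hiff : (p * β > -1 ∧ p * (2 * α + β) > -3) ↔
      (-1 < b ∧ -1 < a + (b + 1) / 2) := by
    constructor
    · rintro ⟨h1, h2⟩
      constructor
      · rw [hbDef]; linarith
      · rw [ha, hbDef]; nlinarith
    · rintro ⟨h1, h2⟩
      rw [hbDef] at h1
      rw [ha, hbDef] at h2
      constructor
      · linarith
      · nlinarith
  rw [hiff]
  constructor
  · rintro ⟨h1, h2⟩
    -- first: -1 < b
    have hbgt : -1 < b := by
      by_contra hble
      push_neg at hble
      haveI : (ae (volume.restrict (Ioo (0:ℝ) T))).NeBot := by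
        refine ae_neBot.2 ?_
        rw [Ne, Measure.restrict_eq_zero]
        simp [Real.volume_Ioo, hT, ne_of_gt hT]
      obtain ⟨t, htm, htint⟩ :=
        ((ae_restrict_mem measurableSet_Ioo).and h1).exists
      have ht : (0:ℝ) < t := htm.1
      have hta : (0:ℝ) < t ^ a := Real.rpow_pos_of_pos ht a
      have hc : 0 < p/(4*t) := by positivity
      have hint2 : IntegrableOn (fun x : ℝ => x ^ b * Real.exp (-(p/(4*t)) * x ^ 2))
          (Ioo 0 1) := by
        have := htint.const_mul (t ^ a)⁻¹
        simp only [hF] at this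
        refine this.congr ?_
        refine Filter.Eventually.of_forall fun x => ?_
        field_simp
      exact stmt0_innerNotInt hc hble hint2
    refine ⟨hbgt, ?_⟩
    -- second: -1 < a + (b+1)/2
    set T' := min T 1 with hT'
    have hT'0 : 0 < T' := lt_min hT one_pos
    set C := Real.exp (-(p/4)) / (b+1) with hC
    have hC0 : 0 < C := by
      rw [hC]
      have : (0:ℝ) < b + 1 := by linarith
      positivity
    have hInt : IntegrableOn (fun t : ℝ => t ^ (a + (b+1)/2)) (Ioo 0 T') := by
      apply Integrable.mono'
        ((IntegrableOn.mono_set h2 (Ioo_subset_Ioo_right (min_le_left T 1))).const_mul C⁻¹)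
      · exact (stmt0_measRpow (a + (b+1)/2)).aestronglyMeasurable
      · filter_upwards [ae_restrict_mem measurableSet_Ioo] with t htm
        have ht : (0:ℝ) < t := htm.1
        have ht1 : t ≤ 1 := le_of_lt (lt_of_lt_of_le htm.2 (min_le_right T 1))
        have hlow := stmt0_innerLower hbgt hp ht ht1
        have hN : ∫ x, ‖F (t, x)‖ ∂(volume.restrict (Ioo (0:ℝ) 1))
            = t ^ a * ∫ x in Ioo (0:ℝ) 1, x ^ b * Real.exp (-(p/(4*t)) * x ^ 2) := by
          simp only [hF]
          exact stmt0_normIntegral ht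
        have hbig : C * t ^ (a + (b+1)/2) ≤ ∫ x, ‖F (t, x)‖ ∂(volume.restrict (Ioo (0:ℝ) 1)) := by
          rw [hN, Real.rpow_add ht]
          calc C * (t ^ a * t ^ ((b+1)/2)) = t ^ a * (C * t ^ ((b+1)/2)) := by ring
          _ ≤ t ^ a * ∫ x in Ioo (0:ℝ) 1, x ^ b * Real.exp (-(p/(4*t)) * x ^ 2) :=
              mul_le_mul_of_nonneg_left hlow (Real.rpow_nonneg ht.le a)
        rw [Real.norm_eq_abs, abs_of_nonneg (Real.rpow_nonneg ht.le _)]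
        calc t ^ (a + (b+1)/2) = C⁻¹ * (C * t ^ (a + (b+1)/2)) := by
              field_simp
        _ ≤ C⁻¹ * ∫ x, ‖F (t, x)‖ ∂(volume.restrict (Ioo (0:ℝ) 1)) :=
              mul_le_mul_of_nonneg_left hbig (inv_nonneg.mpr hC0.le)
    rw [intervalIntegral.integrableOn_Ioo_rpow_iff hT'0] at hInt
    exact hInt
  · rintro ⟨hbgt, hegt⟩
    constructor
    · filter_upwards [ae_restrict_mem measurableSet_Ioo] with t htm
      have ht : (0:ℝ) < t := htm.1
      have hc : 0 < p/(4*t) := by positivity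
      have := (stmt0_innerInt hc hbgt).const_mul (t ^ a)
      simp only [hF]
      exact this
    · set K := (p/4) ^ (-(b + 1) / 2) * (1/2) * Real.Gamma ((b + 1) / 2) with hK
      apply Integrable.mono' (((intervalIntegral.integrableOn_Ioo_rpow_iff hT).2 hegt).const_mul K)
      · exact (hFmeas.aestronglyMeasurable.norm.integral_prod_right')
      · filter_upwards [ae_restrict_mem measurableSet_Ioo] with t htm
        have ht : (0:ℝ) < t := htm.1
        have hN : ∫ x, ‖F (t, x)‖ ∂(volume.restrict (Ioo (0:ℝ) 1))
            = t ^ a * ∫ x in Ioo (0:ℝ) 1, x ^ b * Real.exp (-(p/(4*t)) * x ^ 2) := by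
          simp only [hF]
          exact stmt0_normIntegral ht
        rw [Real.norm_eq_abs, abs_of_nonneg, hN]
        · calc t ^ a * ∫ x in Ioo (0:ℝ) 1, x ^ b * Real.exp (-(p/(4*t)) * x ^ 2)
              ≤ t ^ a * (K * t ^ ((b+1)/2)) :=
                mul_le_mul_of_nonneg_left (stmt0_innerUpper hbgt hp ht)
                  (Real.rpow_nonneg ht.le a)
          _ = K * t ^ (a + (b+1)/2) := by rw [Real.rpow_add ht]; ring
        · exact integral_nonneg fun x => norm_nonneg _
end

section
/- The function (t,x) ↦ t · ∂_x² u_H(t,x) = (1/(2√π)) x t^{-1/2} e^{-x²/(4t)} is square integrable on (0,T)×(0,1), and likewise (t,x) ↦ x · ∂_x² u_H(t,x) = (1/(2√π)) x² t^{-3/2} e^{-x²/(4t)} is square integrable on (0,T)×(0,1). -/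
open MeasureTheory Real Set

lemma aux_exp (u : ℝ) (hu : 0 < u) : Real.exp (-u) ≤ 28 * u ^ (-(9:ℝ)/4) := by
  have h1 : u ^ ((9:ℝ)/4) ≤ 1 + u ^ 3 := by
    rcases le_total u 1 with h | h
    · have := Real.rpow_le_one hu.le h (by norm_num : (0:ℝ) ≤ 9/4)
      nlinarith [pow_nonneg hu.le 3]
    · have h' : u ^ ((9:ℝ)/4) ≤ u ^ ((3:ℝ)) :=
        Real.rpow_le_rpow_of_exponent_le h (by norm_num)
      rw [show ((3:ℝ)) = ((3:ℕ):ℝ) by norm_num, Real.rpow_natCast] at h'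
      linarith
  have h2 : u ^ 3 ≤ 27 * Real.exp u := by
    have h3 : 1 + u/3 ≤ Real.exp (u/3) := by linarith [Real.add_one_le_exp (u/3)]
    have h5 : (1 + u/3)^3 ≤ (Real.exp (u/3))^3 :=
      pow_le_pow_left₀ (by positivity) h3 3
    rw [← Real.exp_nat_mul] at h5
    norm_num at h5
    have h5x : (3:ℝ) * (u/3) = u := by ring
    rw [h5x] at h5
    nlinarith [h5, hu.le, sq_nonneg u]
  have h6 : u ^ ((9:ℝ)/4) ≤ 28 * Real.exp u := by
    have := Real.one_le_exp hu.le
    linarith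
  have hp : (0:ℝ) < u ^ ((9:ℝ)/4) := Real.rpow_pos_of_pos hu _
  have he : (0:ℝ) < Real.exp u := Real.exp_pos u
  rw [Real.exp_neg, show -(9:ℝ)/4 = -((9:ℝ)/4) by norm_num, Real.rpow_neg hu.le,
    inv_eq_one_div, inv_eq_one_div, mul_one_div, div_le_div_iff₀ he hp]
  linarith

lemma sq_rpow' (t : ℝ) (ht : 0 ≤ t) (e : ℝ) : (t ^ e)^2 = t ^ (2*e) := by
  rw [← Real.rpow_natCast (t ^ e) 2, ← Real.rpow_mul ht]
  norm_num [mul_comm]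

lemma exp_sq (a : ℝ) : Real.exp a ^ 2 = Real.exp (2*a) := by
  rw [← Real.exp_nat_mul]; norm_num

lemma key_eq (t x : ℝ) (ht : 0 < t) (hx : 0 < x) :
    x^4 * t^(-(3:ℝ)) * (x^2/(2*t))^(-(9:ℝ)/4)
      = 2^((9:ℝ)/4) * (t^(-(3:ℝ)/4) * x^(-(1:ℝ)/2)) := by
  have hx2t : (0:ℝ) < x^2/(2*t) := by positivity
  rw [Real.rpow_def_of_pos hx2t, Real.rpow_def_of_pos ht, Real.rpow_def_of_pos hx,
    Real.rpow_def_of_pos (by norm_num : (0:ℝ) < 2), Real.rpow_def_of_pos ht,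
    Real.log_div (by positivity) (by positivity), Real.log_mul two_ne_zero ht.ne',
    Real.log_pow, show x^4 = Real.exp (Real.log x) ^ 4 from by rw [Real.exp_log hx],
    ← Real.exp_nat_mul, ← Real.exp_add, ← Real.exp_add, ← Real.exp_add, ← Real.exp_add]
  congr 1
  push_cast
  ring

theorem stmt3 (T : ℝ) (hT : 0 < T) :
    IntegrableOn
      (fun q : ℝ × ℝ =>
        ((1 / (2 * Real.sqrt π)) * q.2 * q.1 ^ (-(1:ℝ)/2) * Real.exp (-q.2 ^ 2 / (4 * q.1))) ^ 2)
      (Ioo 0 T ×ˢ Ioo 0 1) volume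
    ∧
    IntegrableOn
      (fun q : ℝ × ℝ =>
        ((1 / (2 * Real.sqrt π)) * q.2 ^ 2 * q.1 ^ (-(3:ℝ)/2) * Real.exp (-q.2 ^ 2 / (4 * q.1))) ^ 2)
      (Ioo 0 T ×ˢ Ioo 0 1) volume := by
  have hπ : (0:ℝ) < Real.sqrt π := Real.sqrt_pos.mpr Real.pi_pos
  set c : ℝ := 1/(2*Real.sqrt π) with hc
  have hcpos : 0 < c := by positivity
  have hmes : MeasurableSet (Ioo (0:ℝ) T ×ˢ Ioo (0:ℝ) 1) :=
    measurableSet_Ioo.prod measurableSet_Ioo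
  have hfin : volume (Ioo (0:ℝ) T ×ˢ Ioo (0:ℝ) 1) ≠ ⊤ := by
    rw [Measure.volume_eq_prod, Measure.prod_prod]
    exact (ENNReal.mul_lt_top measure_Ioo_lt_top measure_Ioo_lt_top).ne
  have hexp : Measurable (fun q : ℝ × ℝ => Real.exp (-q.2 ^ 2 / (4 * q.1))) :=
    (((measurable_snd.pow_const 2).neg).div (measurable_const.mul measurable_fst)).exp
  have hrp : ∀ e : ℝ, (fun q : ℝ × ℝ => q.1 ^ e)
      =ᵐ[volume.restrict (Ioo 0 T ×ˢ Ioo 0 1)] (fun q => Real.exp (Real.log q.1 * e)) := by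
    intro e
    filter_upwards [ae_restrict_mem hmes] with q hq
    exact Real.rpow_def_of_pos hq.1.1 e
  have hmeas1 : AEStronglyMeasurable
      (fun q : ℝ × ℝ => (c * q.2 * q.1 ^ (-(1:ℝ)/2) * Real.exp (-q.2 ^ 2 / (4 * q.1))) ^ 2)
      (volume.restrict (Ioo 0 T ×ˢ Ioo 0 1)) := by
    have hm : Measurable (fun q : ℝ × ℝ =>
        (c * q.2 * Real.exp (Real.log q.1 * (-(1:ℝ)/2)) * Real.exp (-q.2 ^ 2 / (4 * q.1))) ^ 2) :=
      (((measurable_const.mul measurable_snd).mul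
        ((measurable_fst.log.mul measurable_const).exp)).mul hexp).pow_const 2
    refine hm.aestronglyMeasurable.congr ?_
    filter_upwards [hrp (-(1:ℝ)/2)] with q hq
    rw [← hq]
  have hmeas2 : AEStronglyMeasurable
      (fun q : ℝ × ℝ => (c * q.2 ^ 2 * q.1 ^ (-(3:ℝ)/2) * Real.exp (-q.2 ^ 2 / (4 * q.1))) ^ 2)
      (volume.restrict (Ioo 0 T ×ˢ Ioo 0 1)) := by
    have hm : Measurable (fun q : ℝ × ℝ =>
        (c * q.2 ^ 2 * Real.exp (Real.log q.1 * (-(3:ℝ)/2)) * Real.exp (-q.2 ^ 2 / (4 * q.1))) ^ 2) :=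
      (((measurable_const.mul (measurable_snd.pow_const 2)).mul
        ((measurable_fst.log.mul measurable_const).exp)).mul hexp).pow_const 2
    refine hm.aestronglyMeasurable.congr ?_
    filter_upwards [hrp (-(3:ℝ)/2)] with q hq
    rw [← hq]
  constructor
  · -- bounded by 2 c²
    refine Integrable.mono' (g := fun _ : ℝ × ℝ => 2*c^2)
      (integrableOn_const hfin) hmeas1 ?_
    filter_upwards [ae_restrict_mem hmes] with q hq
    obtain ⟨⟨ht, _⟩, ⟨hx, _⟩⟩ := hq
    set t := q.1; set x := q.2
    have h1 : (c * x * t ^ (-(1:ℝ)/2) * Real.exp (-x ^ 2 / (4 * t))) ^ 2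
        = c^2 * (x^2 * t ^ (-(1:ℝ)) * Real.exp (-(x^2/(2*t)))) := by
      have e1 : (t ^ (-(1:ℝ)/2))^2 = t ^ (-(1:ℝ)) := by
        rw [sq_rpow' t ht.le]; norm_num
      have e2 : (Real.exp (-x ^ 2 / (4 * t)))^2 = Real.exp (-(x^2/(2*t))) := by
        rw [exp_sq]; congr 1; field_simp; ring
      calc (c * x * t ^ (-(1:ℝ)/2) * Real.exp (-x ^ 2 / (4 * t))) ^ 2
          = c^2 * (x^2 * (t ^ (-(1:ℝ)/2))^2 * (Real.exp (-x ^ 2 / (4 * t)))^2) := by ring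
        _ = _ := by rw [e1, e2]
    rw [Real.norm_eq_abs, h1, abs_of_nonneg (by positivity)]
    have hu : (0:ℝ) < x^2/(2*t) := by positivity
    have h2 : x^2 * t ^ (-(1:ℝ)) * Real.exp (-(x^2/(2*t))) ≤ 2 := by
      have e3 : x^2 * t ^ (-(1:ℝ)) = 2 * (x^2/(2*t)) := by
        rw [Real.rpow_neg_one]; field_simp
      rw [e3]
      have h4 : (x^2/(2*t)) * Real.exp (-(x^2/(2*t))) ≤ 1 := by
        rw [Real.exp_neg]
        rw [mul_inv_le_iff₀ (Real.exp_pos _), one_mul]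
        linarith [Real.add_one_le_exp (x^2/(2*t))]
      calc 2 * (x^2/(2*t)) * Real.exp (-(x^2/(2*t)))
          = 2 * ((x^2/(2*t)) * Real.exp (-(x^2/(2*t)))) := by ring
        _ ≤ 2 * 1 := by nlinarith [h4]
        _ = 2 := by ring
    nlinarith [sq_nonneg c, h2, Real.exp_pos (-(x^2/(2*t))), hu]
  · -- dominated by K t^{-3/4} x^{-1/2}
    set K : ℝ := c^2 * (28 * 2^((9:ℝ)/4)) with hK
    have hg : IntegrableOn
        (fun q : ℝ × ℝ => K * (q.1 ^ (-(3:ℝ)/4) * q.2 ^ (-(1:ℝ)/2)))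
        (Ioo 0 T ×ˢ Ioo 0 1) volume := by
      have h1 : IntegrableOn (fun t : ℝ => t ^ (-(3:ℝ)/4)) (Ioo 0 T) volume :=
        (intervalIntegral.integrableOn_Ioo_rpow_iff hT).mpr (by norm_num)
      have h2 : IntegrableOn (fun x : ℝ => x ^ (-(1:ℝ)/2)) (Ioo (0:ℝ) 1) volume :=
        (intervalIntegral.integrableOn_Ioo_rpow_iff one_pos).mpr (by norm_num)
      have h3 := h1.mul_prod h2
      rw [Measure.prod_restrict, ← Measure.volume_eq_prod] at h3
      exact h3.const_mul K
    refine Integrable.mono' hg hmeas2 ?_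
    filter_upwards [ae_restrict_mem hmes] with q hq
    obtain ⟨⟨ht, _⟩, ⟨hx, _⟩⟩ := hq
    set t := q.1; set x := q.2
    have hu : (0:ℝ) < x^2/(2*t) := by positivity
    have h1 : (c * x ^ 2 * t ^ (-(3:ℝ)/2) * Real.exp (-x ^ 2 / (4 * t))) ^ 2
        = c^2 * (x^4 * t ^ (-(3:ℝ)) * Real.exp (-(x^2/(2*t)))) := by
      have e1 : (t ^ (-(3:ℝ)/2))^2 = t ^ (-(3:ℝ)) := by
        rw [sq_rpow' t ht.le]; norm_num
      have e2 : (Real.exp (-x ^ 2 / (4 * t)))^2 = Real.exp (-(x^2/(2*t))) := by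
        rw [exp_sq]; congr 1; field_simp; ring
      calc (c * x ^ 2 * t ^ (-(3:ℝ)/2) * Real.exp (-x ^ 2 / (4 * t))) ^ 2
          = c^2 * (x^4 * (t ^ (-(3:ℝ)/2))^2 * (Real.exp (-x ^ 2 / (4 * t)))^2) := by ring
        _ = _ := by rw [e1, e2]
    rw [Real.norm_eq_abs, h1, abs_of_nonneg (by positivity)]
    have h2 : x^4 * t ^ (-(3:ℝ)) * Real.exp (-(x^2/(2*t)))
        ≤ x^4 * t ^ (-(3:ℝ)) * (28 * (x^2/(2*t)) ^ (-(9:ℝ)/4)) := by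
      have := aux_exp (x^2/(2*t)) hu
      have hpos : (0:ℝ) ≤ x^4 * t ^ (-(3:ℝ)) := by positivity
      exact mul_le_mul_of_nonneg_left this hpos
    have h3 : x^4 * t ^ (-(3:ℝ)) * (28 * (x^2/(2*t)) ^ (-(9:ℝ)/4))
        = 28 * 2^((9:ℝ)/4) * (t^(-(3:ℝ)/4) * x^(-(1:ℝ)/2)) := by
      have := key_eq t x ht hx
      calc x^4 * t ^ (-(3:ℝ)) * (28 * (x^2/(2*t)) ^ (-(9:ℝ)/4))
          = 28 * (x^4 * t^(-(3:ℝ)) * (x^2/(2*t))^(-(9:ℝ)/4)) := by ring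
        _ = 28 * (2^((9:ℝ)/4) * (t^(-(3:ℝ)/4) * x^(-(1:ℝ)/2))) := by rw [this]
        _ = _ := by ring
    calc c^2 * (x^4 * t ^ (-(3:ℝ)) * Real.exp (-(x^2/(2*t))))
        ≤ c^2 * (28 * 2^((9:ℝ)/4) * (t^(-(3:ℝ)/4) * x^(-(1:ℝ)/2))) := by
          rw [← h3]; exact mul_le_mul_of_nonneg_left h2 (by positivity)
      _ = K * (t^(-(3:ℝ)/4) * x^(-(1:ℝ)/2)) := by rw [hK]; ring
end

section
/- For any fixed x>0 and any k ∈ ℕ, the k-th derivative with respect to t of u_H(t,x) tends to 0 as t tends to 0 from above. -/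
open MeasureTheory Real Set Filter Topology

/-- `u_H(t,x) = erfc(x/(2√t)) = (2/√π) ∫_{x/(2√t)}^∞ e^{-s²} ds`. -/
noncomputable def uH (t x : ℝ) : ℝ :=
  (2 / Real.sqrt π) * ∫ s in Set.Ioi (x / (2 * Real.sqrt t)), Real.exp (-s ^ 2)

namespace UHAux

noncomputable def F (a : ℝ) : ℝ := ∫ s in Set.Ioi a, Real.exp (-s ^ 2)

lemma integrable_gauss : Integrable (fun s : ℝ => Real.exp (-s ^ 2)) := by
  have := integrable_exp_neg_mul_sq (b := 1) one_pos
  simpa using this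

lemma F_eq (a : ℝ) (ha : 0 ≤ a) :
    F a = F 0 - ∫ s in (0:ℝ)..a, Real.exp (-s ^ 2) := by
  have h1 : (∫ s in (0:ℝ)..a, Real.exp (-s ^ 2)) = ∫ s in Set.Ioc 0 a, Real.exp (-s ^ 2) :=
    intervalIntegral.integral_of_le ha
  have h2 : F 0 = (∫ s in Set.Ioc 0 a, Real.exp (-s ^ 2)) + F a := by
    rw [F, F, ← Set.Ioc_union_Ioi_eq_Ioi ha,
      MeasureTheory.setIntegral_union (Set.Ioc_disjoint_Ioi le_rfl) measurableSet_Ioi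
        integrable_gauss.integrableOn integrable_gauss.integrableOn]
  rw [h1]; linarith

lemma F_tendsto : Tendsto F atTop (𝓝 0) := by
  have h := MeasureTheory.intervalIntegral_tendsto_integral_Ioi 0
    integrable_gauss.integrableOn tendsto_id
  have h2 : Tendsto (fun a : ℝ => F 0 - ∫ s in (0:ℝ)..a, Real.exp (-s ^ 2))
      atTop (𝓝 (F 0 - F 0)) := tendsto_const_nhds.sub h
  rw [sub_self] at h2
  refine h2.congr' ?_
  filter_upwards [eventually_ge_atTop (0:ℝ)] with a ha using (F_eq a ha).symm

lemma F_hasDerivAt (a : ℝ) (ha : 0 < a) : HasDerivAt F (-Real.exp (-a ^ 2)) a := by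
  have hc : Continuous fun s : ℝ => Real.exp (-s ^ 2) := by continuity
  have hΦ : HasDerivAt (fun u => ∫ s in (0:ℝ)..u, Real.exp (-s ^ 2)) (Real.exp (-a ^ 2)) a :=
    intervalIntegral.integral_hasDerivAt_right integrable_gauss.intervalIntegrable
      (hc.stronglyMeasurableAtFilter _ _) hc.continuousAt
  have h : HasDerivAt (fun u => F 0 - ∫ s in (0:ℝ)..u, Real.exp (-s ^ 2))
      (-Real.exp (-a ^ 2)) a := by
    exact ((hasDerivAt_const a (F 0)).sub hΦ).congr_deriv (by simp)
  refine h.congr_of_eventuallyEq ?_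
  filter_upwards [isOpen_Ioi.mem_nhds ha] with b hb using F_eq b (le_of_lt hb)

lemma g_hasDerivAt (x t : ℝ) (ht : 0 < t) :
    HasDerivAt (fun t => x / (2 * Real.sqrt t))
      (-(x * (Real.sqrt t)⁻¹ / (4 * t))) t := by
  have hstpos : 0 < Real.sqrt t := Real.sqrt_pos.2 ht
  have hsq : Real.sqrt t ^ 2 = t := Real.sq_sqrt ht.le
  have hs : HasDerivAt Real.sqrt (1 / (2 * Real.sqrt t)) t := Real.hasDerivAt_sqrt ht.ne'
  have h2 : HasDerivAt (fun t => 2 * Real.sqrt t) (2 * (1 / (2 * Real.sqrt t))) t :=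
    hs.const_mul 2
  have hne : 2 * Real.sqrt t ≠ 0 := by positivity
  have h := (hasDerivAt_const t x).div h2 hne
  refine h.congr_deriv ?_
  generalize Real.sqrt t = st at *
  rw [← hsq]
  field_simp
  ring

lemma uH_hasDerivAt (x : ℝ) (hx : 0 < x) (t : ℝ) (ht : 0 < t) :
    HasDerivAt (fun s => uH s x)
      ((Polynomial.C (x / (2 * Real.sqrt π)) * Polynomial.X ^ 3).eval ((Real.sqrt t)⁻¹)
        * Real.exp (-(x ^ 2 / (4 * t)))) t := by
  have hstpos : 0 < Real.sqrt t := Real.sqrt_pos.2 ht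
  have hsq : Real.sqrt t ^ 2 = t := Real.sq_sqrt ht.le
  have hg := g_hasDerivAt x t ht
  have hgt : 0 < x / (2 * Real.sqrt t) := by positivity
  have hF := F_hasDerivAt _ hgt
  have h := (hF.comp t hg).const_mul (2 / Real.sqrt π)
  have harg : (x / (2 * Real.sqrt t)) ^ 2 = x ^ 2 / (4 * t) := by
    rw [div_pow, mul_pow, hsq]; norm_num
  have hπ : 0 < Real.sqrt π := Real.sqrt_pos.2 Real.pi_pos
  refine h.congr_deriv ?_
  rw [harg]
  simp only [Polynomial.eval_mul, Polynomial.eval_C, Polynomial.eval_pow, Polynomial.eval_X]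
  generalize Real.sqrt t = st at *
  rw [← hsq]
  field_simp
  ring

lemma deriv_aux (x : ℝ) (P : Polynomial ℝ) (t : ℝ) (ht : 0 < t) :
    HasDerivAt (fun t => P.eval ((Real.sqrt t)⁻¹) * Real.exp (-(x ^ 2 / (4 * t))))
      (((Polynomial.C (x ^ 2 / 4) * Polynomial.X ^ 4 * P
          - Polynomial.C (1 / 2 : ℝ) * Polynomial.X ^ 3 * P.derivative).eval
          ((Real.sqrt t)⁻¹)) * Real.exp (-(x ^ 2 / (4 * t)))) t := by
  have hstpos : 0 < Real.sqrt t := Real.sqrt_pos.2 ht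
  have hsq : Real.sqrt t ^ 2 = t := Real.sq_sqrt ht.le
  have hs : HasDerivAt Real.sqrt (1 / (2 * Real.sqrt t)) t := Real.hasDerivAt_sqrt ht.ne'
  have hu : HasDerivAt (fun t => (Real.sqrt t)⁻¹)
      (-(1 / (2 * Real.sqrt t)) / Real.sqrt t ^ 2) t := hs.inv hstpos.ne'
  have hP : HasDerivAt (fun t => P.eval ((Real.sqrt t)⁻¹))
      (P.derivative.eval ((Real.sqrt t)⁻¹) * (-(1 / (2 * Real.sqrt t)) / Real.sqrt t ^ 2)) t :=
    (P.hasDerivAt _).comp t hu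
  have hinner : HasDerivAt (fun t : ℝ => -(x ^ 2 / (4 * t)))
      (-(x ^ 2 / 4) * -(t ^ 2)⁻¹) t := by
    have h := (hasDerivAt_inv ht.ne').const_mul (-(x ^ 2 / 4))
    have heq : (fun t : ℝ => -(x ^ 2 / (4 * t))) = fun t : ℝ => -(x ^ 2 / 4) * t⁻¹ := by
      funext s; ring
    rw [heq]; exact h
  have hE : HasDerivAt (fun t : ℝ => Real.exp (-(x ^ 2 / (4 * t))))
      (Real.exp (-(x ^ 2 / (4 * t))) * (-(x ^ 2 / 4) * -(t ^ 2)⁻¹)) t := hinner.exp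
  have h := hP.mul hE
  refine h.congr_deriv ?_
  simp only [Polynomial.eval_sub, Polynomial.eval_mul, Polynomial.eval_C, Polynomial.eval_pow,
    Polynomial.eval_X]
  generalize Real.sqrt t = st at *
  rw [← hsq]
  field_simp
  ring

lemma iteratedDeriv_eq (x : ℝ) (hx : 0 < x) (k : ℕ) :
    ∃ P : Polynomial ℝ, ∀ t : ℝ, 0 < t →
      iteratedDeriv (k + 1) (fun s => uH s x) t
        = P.eval ((Real.sqrt t)⁻¹) * Real.exp (-(x ^ 2 / (4 * t))) := by
  induction k with
  | zero =>
    refine ⟨Polynomial.C (x / (2 * Real.sqrt π)) * Polynomial.X ^ 3, fun t ht => ?_⟩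
    rw [iteratedDeriv_one]
    exact (uH_hasDerivAt x hx t ht).deriv
  | succ k ih =>
    obtain ⟨P, hP⟩ := ih
    refine ⟨Polynomial.C (x ^ 2 / 4) * Polynomial.X ^ 4 * P
      - Polynomial.C (1 / 2 : ℝ) * Polynomial.X ^ 3 * P.derivative, fun t ht => ?_⟩
    rw [iteratedDeriv_succ]
    have hev : iteratedDeriv (k + 1) (fun s => uH s x)
        =ᶠ[𝓝 t] fun t => P.eval ((Real.sqrt t)⁻¹) * Real.exp (-(x ^ 2 / (4 * t))) := by
      filter_upwards [isOpen_Ioi.mem_nhds ht] with s hs using hP s hs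
    rw [hev.deriv_eq]
    exact (deriv_aux x P t ht).deriv

lemma mono_tendsto (i : ℕ) (c : ℝ) (hc : 0 < c) :
    Tendsto (fun v : ℝ => v ^ i * Real.exp (-(c * v ^ 2))) atTop (𝓝 0) := by
  have h1 : Tendsto (fun w : ℝ => w ^ i * Real.exp (-w)) atTop (𝓝 0) :=
    Real.tendsto_pow_mul_exp_neg_atTop_nhds_zero i
  have h2 : Tendsto (fun w : ℝ => c * w) atTop atTop :=
    Tendsto.const_mul_atTop hc tendsto_id
  have h3 : Tendsto (fun w : ℝ => (c * w) ^ i * Real.exp (-(c * w))) atTop (𝓝 0) := h1.comp h2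
  have h4 : Tendsto (fun w : ℝ => w ^ i * Real.exp (-(c * w))) atTop (𝓝 0) := by
    have h5 := h3.const_mul ((c ^ i)⁻¹)
    rw [mul_zero] at h5
    refine h5.congr' ?_
    filter_upwards with w
    rw [mul_pow]
    field_simp
  have h5 : Tendsto (fun v : ℝ => (v ^ 2) ^ i * Real.exp (-(c * v ^ 2))) atTop (𝓝 0) :=
    h4.comp (tendsto_pow_atTop two_ne_zero)
  refine squeeze_zero' ?_ ?_ h5
  · filter_upwards [eventually_ge_atTop (0:ℝ)] with v hv using by positivity
  · filter_upwards [eventually_ge_atTop (1:ℝ)] with v hv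
    have hle : v ^ i ≤ (v ^ 2) ^ i := by
      rw [← pow_mul]
      exact pow_le_pow_right₀ hv (by omega)
    exact mul_le_mul_of_nonneg_right hle (Real.exp_nonneg _)

lemma poly_tendsto (P : Polynomial ℝ) (c : ℝ) (hc : 0 < c) :
    Tendsto (fun v : ℝ => P.eval v * Real.exp (-(c * v ^ 2))) atTop (𝓝 0) := by
  have hrw : ∀ v : ℝ, P.eval v * Real.exp (-(c * v ^ 2))
      = ∑ i ∈ Finset.range (P.natDegree + 1),
          P.coeff i * (v ^ i * Real.exp (-(c * v ^ 2))) := by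
    intro v
    rw [Polynomial.eval_eq_sum_range, Finset.sum_mul]
    simp [mul_assoc]
  simp only [hrw]
  have h := tendsto_finset_sum (Finset.range (P.natDegree + 1))
    (fun i _ => by simpa using (mono_tendsto i c hc).const_mul (P.coeff i) :
      ∀ i ∈ Finset.range (P.natDegree + 1),
        Tendsto (fun v : ℝ => P.coeff i * (v ^ i * Real.exp (-(c * v ^ 2)))) atTop (𝓝 0))
  simpa using h

lemma sqrt_inv_tendsto : Tendsto (fun t : ℝ => (Real.sqrt t)⁻¹) (𝓝[>] 0) atTop := by
  apply tendsto_inv_nhdsGT_zero.comp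
  rw [tendsto_nhdsWithin_iff]
  constructor
  · have h : Tendsto Real.sqrt (𝓝[>] 0) (𝓝 (Real.sqrt 0)) :=
      (Real.continuous_sqrt.tendsto 0).mono_left nhdsWithin_le_nhds
    simpa using h
  · filter_upwards [self_mem_nhdsWithin] with t ht
    exact Real.sqrt_pos.2 ht

end UHAux

theorem stmt4 (x : ℝ) (hx : 0 < x) (k : ℕ) :
    Filter.Tendsto (fun t => iteratedDeriv k (fun s => uH s x) t)
      (nhdsWithin 0 (Set.Ioi 0)) (nhds 0) := by
  have hu := UHAux.sqrt_inv_tendsto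
  cases k with
  | zero =>
    simp only [iteratedDeriv_zero]
    have hg : Tendsto (fun t : ℝ => x / (2 * Real.sqrt t)) (𝓝[>] 0) atTop := by
      have h := Tendsto.const_mul_atTop (show (0:ℝ) < x / 2 by positivity) hu
      exact h.congr fun t => by ring
    have h := (UHAux.F_tendsto.comp hg).const_mul (2 / Real.sqrt π)
    rw [mul_zero] at h
    exact h
  | succ k =>
    obtain ⟨P, hP⟩ := UHAux.iteratedDeriv_eq x hx k
    have hmain := (UHAux.poly_tendsto P (x ^ 2 / 4) (by positivity)).comp hu
    have h2 : Tendsto (fun t : ℝ => P.eval ((Real.sqrt t)⁻¹) * Real.exp (-(x ^ 2 / (4 * t))))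
        (𝓝[>] 0) (𝓝 0) := by
      refine hmain.congr' ?_
      filter_upwards [self_mem_nhdsWithin] with t ht
      have hsq : Real.sqrt t ^ 2 = t := Real.sq_sqrt (le_of_lt ht)
      have hne : t ≠ 0 := ne_of_gt ht
      simp only [Function.comp]
      congr 1
      rw [inv_pow, hsq]
      field_simp
    refine h2.congr' ?_
    filter_upwards [self_mem_nhdsWithin] with t ht using (hP t ht).symm
end
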